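/- Let A be Azumaya over commutative Noetherian R. Then for each m ≥ 0, D^m_k(A) is generated as an A-bimodule by the extensions of elements of D^m_k(R): D^m_k(A) = (A⊗_R A^op) · {φ̄ : φ ∈ D^m_k(R)} · (A⊗_R A^op). Explicitly, every Φ ∈ D^m_k(A) equals Σ_{i,j} ρ_{b_i} ∘ (f_i Φ ρ_{b_j})‾ ∘ f_j. -/
import Mathlib


open MulOpposite

instance (priority := 900) smulCommSelf' {k A : Type*} [CommSemiring k] [Semiring A]
    [Algebra k A] : SMulCommClass A k A := SMulCommClass.symm k A A

variable (k : Type*) [Field k]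
variable (A : Type*) [Ring A] [Algebra k A]
variable (L : Type*) [AddCommGroup L] [Module k L] [Module A L] [SMulCommClass A k L]

/-- Left action of `A` on `L` as a `k`-linear endomorphism. -/
def lop (a : A) : L →ₗ[k] L where
  toFun x := a • x
  map_add' := smul_add a
  map_smul' c x := smul_comm a c x

/-- The `A`-sub-bimodule (as an additive subgroup closed under both actions)
generated by a set of operators. -/
def genBi (T : Set (L →ₗ[k] L)) : AddSubgroup (L →ₗ[k] L) :=
  AddSubgroup.closure {ψ | ∃ a b : A, ∃ t ∈ T, ψ = (lop k A L a).comp (t.comp (lop k A L b))}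

/-- The Lunts–Rosenberg filtration of differential operators on the left `A`-module `L`:
`Dfil 0` is the sub-bimodule generated by the central elements of `Hom_k(L,L)`, and
`Dfil (m+1)` is the sub-bimodule generated by operators whose commutators with `A`
lie in `Dfil m`. -/
def Dfil : ℕ → AddSubgroup (L →ₗ[k] L)
  | 0 => genBi k A L {φ | ∀ a : A, (lop k A L a).comp φ = φ.comp (lop k A L a)}
  | (m+1) => genBi k A L {φ | ∀ a : A, (lop k A L a).comp φ - φ.comp (lop k A L a) ∈ Dfil m}

/-- The ring of differential operators: union of the filtration. -/
def Ddiff : Set (L →ₗ[k] L) := ⋃ m, (Dfil k A L m : Set (L →ₗ[k] L))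

open TensorProduct MulOpposite in
/-- The Azumaya condition for an `R`-algebra `A`: finitely generated, projective and
faithful as an `R`-module, `R·1` is the center of `A`, and the canonical map
`A ⊗_R A^op → End_R(A)`, `a ⊗ b^op ↦ (c ↦ a c b)`, is bijective (here recorded as the
existence of a linear equivalence realizing this map). -/
structure IsAzumayaAlg (R A : Type*) [CommRing R] [Ring A] [Algebra R A] : Prop where
  finite : Module.Finite R A
  projective : Module.Projective R A
  faithful : FaithfulSMul R A
  center_le : ∀ a : A, (∀ b : A, a * b = b * a) → ∃ r : R, algebraMap R A r = a
  bij : ∃ e : (A ⊗[R] Aᵐᵒᵖ) ≃ₗ[R] (A →ₗ[R] A),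
      ∀ (a b x : A), e (a ⊗ₜ[R] op b) x = a * x * b

section DualBasis

variable (k R A : Type*) [Field k] [CommRing R] [Algebra k R] [Ring A] [Algebra R A]
  [Algebra k A] [IsScalarTower k R A] [SMulCommClass R k A] {n : ℕ}

/-- The extension `φ̄ = Σ_i ρ_{b_i} ∘ φ ∘ f_i ∈ Hom_k(A,A)` of an operator
`φ ∈ Hom_k(R,R)`, relative to a dual basis `{b_i, f_i}` of the `R`-module `A`. -/
noncomputable def extOp (b : Fin (n + 1) → A) (f : Fin (n + 1) → (A →ₗ[R] R))
    (φ : R →ₗ[k] R) : A →ₗ[k] A :=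
  ∑ i, (LinearMap.mulRight k (b i)).comp
    (((Algebra.linearMap R A).restrictScalars k).comp (φ.comp ((f i).restrictScalars k)))

end DualBasis

@[simp] lemma lop_apply {k : Type*} [Field k] {A : Type*} [Ring A] [Algebra k A]
    {L : Type*} [AddCommGroup L] [Module k L] [Module A L] [SMulCommClass A k L]
    (a : A) (x : L) : lop k A L a x = a • x := rfl

section Aux

variable (k R A : Type*) [Field k] [CommRing R] [Algebra k R] [Ring A] [Algebra R A]
  [Algebra k A] [IsScalarTower k R A] [SMulCommClass R k A]

/-- Auxiliary operator `r ↦ g (a * Φ (ι r * c))`. -/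
noncomputable def psiOp (a c : A) (g : A →ₗ[R] R) (Φ : A →ₗ[k] A) : R →ₗ[k] R :=
  (g.restrictScalars k).comp ((lop k A A a).comp (Φ.comp ((LinearMap.mulRight k c).comp
    ((Algebra.linearMap R A).restrictScalars k))))

omit [SMulCommClass R k A] in
lemma psiOp_apply (a c : A) (g : A →ₗ[R] R) (Φ : A →ₗ[k] A) (r : R) :
    psiOp k R A a c g Φ r = g (a * Φ (algebraMap R A r * c)) := by
  simp [psiOp, smul_eq_mul]

lemma psiOp_comm (a c : A) (g : A →ₗ[R] R) (Φ : A →ₗ[k] A) (r : R) :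
    (lop k R R r).comp (psiOp k R A a c g Φ) - (psiOp k R A a c g Φ).comp (lop k R R r)
      = psiOp k R A a c g ((lop k A A (algebraMap R A r)).comp Φ
          - Φ.comp (lop k A A (algebraMap R A r))) := by
  ext s
  simp only [LinearMap.sub_apply, LinearMap.comp_apply, psiOp_apply, lop_apply,
    smul_eq_mul, map_sub, mul_sub]
  have t1 : r * g (a * Φ (algebraMap R A s * c))
      = g (a * (algebraMap R A r * Φ (algebraMap R A s * c))) := by
    rw [← smul_eq_mul, ← map_smul, Algebra.smul_def, ← mul_assoc, Algebra.commutes, mul_assoc]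
  have t2 : algebraMap R A (r * s) * c = algebraMap R A r * (algebraMap R A s * c) := by
    rw [map_mul, mul_assoc]
  rw [t1, t2]

lemma psiOp_conj (a a' b' c : A) (g : A →ₗ[R] R) (t : A →ₗ[k] A) :
    psiOp k R A a c g ((lop k A A a').comp (t.comp (lop k A A b')))
      = psiOp k R A (a * a') (b' * c) g t := by
  ext s
  simp only [psiOp_apply, LinearMap.comp_apply, lop_apply, smul_eq_mul, mul_assoc]
  congr 3
  rw [← mul_assoc, ← Algebra.commutes, mul_assoc]

lemma psiOp_mem (m : ℕ) (Φ : A →ₗ[k] A) (hΦ : Φ ∈ Dfil k A A m)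
    (a c : A) (g : A →ₗ[R] R) : psiOp k R A a c g Φ ∈ Dfil k R R m := by
  induction m generalizing Φ a c g with
  | zero =>
    refine AddSubgroup.closure_induction
      (p := fun Φ _ => ∀ a c g, psiOp k R A a c g Φ ∈ Dfil k R R 0) ?_ ?_ ?_ ?_ hΦ a c g
    · rintro ψ ⟨a', b', t, ht, rfl⟩ a c g
      rw [psiOp_conj]
      apply AddSubgroup.subset_closure
      refine ⟨1, 1, psiOp k R A (a * a') (b' * c) g t, ?_, by ext s; simp⟩
      intro r
      have h0 : psiOp k R A (a * a') (b' * c) g ((lop k A A (algebraMap R A r)).comp t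
          - t.comp (lop k A A (algebraMap R A r))) = 0 := by
        rw [ht (algebraMap R A r), sub_self]
        ext s; simp [psiOp, mul_add]
      exact sub_eq_zero.mp ((psiOp_comm k R A _ _ g t r).trans h0)
    · intro a c g
      have h0 : psiOp k R A a c g 0 = 0 := by ext s; simp [psiOp, mul_add]
      rw [h0]; exact zero_mem _
    · intro x y _ _ hx hy a c g
      have h0 : psiOp k R A a c g (x + y) = psiOp k R A a c g x + psiOp k R A a c g y := by
        ext s; simp [psiOp, mul_add]
      rw [h0]; exact add_mem (hx a c g) (hy a c g)
    · intro x _ hx a c g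
      have h0 : psiOp k R A a c g (-x) = -psiOp k R A a c g x := by
        ext s; simp [psiOp, mul_add]
      rw [h0]; exact neg_mem (hx a c g)
  | succ m ih =>
    refine AddSubgroup.closure_induction
      (p := fun Φ _ => ∀ a c g, psiOp k R A a c g Φ ∈ Dfil k R R (m + 1)) ?_ ?_ ?_ ?_ hΦ a c g
    · rintro ψ ⟨a', b', t, ht, rfl⟩ a c g
      rw [psiOp_conj]
      apply AddSubgroup.subset_closure
      refine ⟨1, 1, psiOp k R A (a * a') (b' * c) g t, ?_, by ext s; simp⟩
      intro r
      rw [psiOp_comm]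
      exact ih _ (ht (algebraMap R A r)) _ _ _
    · intro a c g
      have h0 : psiOp k R A a c g 0 = 0 := by ext s; simp [psiOp, mul_add]
      rw [h0]; exact zero_mem _
    · intro x y _ _ hx hy a c g
      have h0 : psiOp k R A a c g (x + y) = psiOp k R A a c g x + psiOp k R A a c g y := by
        ext s; simp [psiOp, mul_add]
      rw [h0]; exact add_mem (hx a c g) (hy a c g)
    · intro x _ hx a c g
      have h0 : psiOp k R A a c g (-x) = -psiOp k R A a c g x := by
        ext s; simp [psiOp, mul_add]
      rw [h0]; exact neg_mem (hx a c g)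

end Aux

section Stmt11

variable (k R A : Type*) [Field k] [CommRing R] [Algebra k R] [Ring A] [Algebra R A]
  [Algebra k A] [IsScalarTower k R A] [SMulCommClass R k A] {n : ℕ}

/-- The component `(Φ)_{i,j} = f_i ∘ Φ ∘ ρ_{b_j}`, an operator on `R`. -/
noncomputable def phiComp (b : Fin (n + 1) → A) (f : Fin (n + 1) → (A →ₗ[R] R))
    (Φ : A →ₗ[k] A) (i j : Fin (n + 1)) : R →ₗ[k] R :=
  ((f i).restrictScalars k).comp (Φ.comp ((LinearMap.mulRight k (b j)).comp
    ((Algebra.linearMap R A).restrictScalars k)))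

/-- For an Azumaya algebra `A` over a commutative Noetherian `k`-algebra `R`, `D^m_k(A)`
is generated as an `A`-bimodule by the extensions of elements of `D^m_k(R)`: for every
`Φ ∈ D^m_k(A)`, each component `(Φ)_{i,j}` lies in `D^m_k(R)` and
`Φ = Σ_{i,j} ρ_{b_i} ∘ (Φ)_{i,j}‾ ∘ f_j`. -/
theorem Dfil_azumaya_generated_by_ext [IsNoetherianRing R] (hAz : IsAzumayaAlg R A)
    (b : Fin (n + 1) → A) (f : Fin (n + 1) → (A →ₗ[R] R))
    (hdb : ∀ a : A, ∑ i, f i a • b i = a) (hb0 : b 0 = 1)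
    (hf0 : ∀ r : R, f 0 (algebraMap R A r) = r)
    (hfi : ∀ i, i ≠ 0 → ∀ r : R, f i (algebraMap R A r) = 0)
    (m : ℕ) (Φ : A →ₗ[k] A) (hΦ : Φ ∈ Dfil k A A m) :
    (∀ i j, phiComp k R A b f Φ i j ∈ Dfil k R R m) ∧
    Φ = ∑ i, ∑ j, (LinearMap.mulRight k (b i)).comp
      ((extOp k R A b f (phiComp k R A b f Φ i j)).comp
        (((Algebra.linearMap R A).restrictScalars k).comp ((f j).restrictScalars k))) := by
  constructor
  · intro i j
    have h : phiComp k R A b f Φ i j = psiOp k R A 1 (b j) (f i) Φ := by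
      ext r; simp [phiComp, psiOp_apply]
    rw [h]
    exact psiOp_mem k R A m Φ hΦ _ _ _
  · have key : ∀ (φ : R →ₗ[k] R) (r : R),
        extOp k R A b f φ (algebraMap R A r) = algebraMap R A (φ r) := by
      intro φ r
      rw [extOp, LinearMap.sum_apply, Finset.sum_eq_single 0]
      · simp [hf0, hb0]
      · intro l _ hl
        simp [hfi l hl]
      · intro h; exact absurd (Finset.mem_univ 0) h
    have ha : ∀ x : A, ∑ j, algebraMap R A (f j x) * b j = x := by
      intro x
      conv_rhs => rw [← hdb x]
      exact Finset.sum_congr rfl fun j _ => (Algebra.smul_def _ _).symm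
    apply LinearMap.ext
    intro x
    simp only [LinearMap.sum_apply, LinearMap.comp_apply, LinearMap.restrictScalars_apply,
      Algebra.linearMap_apply, key, LinearMap.mulRight_apply]
    have step : ∀ i : Fin (n + 1),
        ∑ j, algebraMap R A (phiComp k R A b f Φ i j (f j x)) * b i
          = algebraMap R A (f i (Φ x)) * b i := by
      intro i
      rw [← Finset.sum_mul, ← map_sum (algebraMap R A)]
      congr 2
      have : ∀ j : Fin (n + 1), phiComp k R A b f Φ i j (f j x)
          = f i (Φ (algebraMap R A (f j x) * b j)) := by
        intro j; simp [phiComp]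
      simp_rw [this]
      rw [← map_sum (f i), ← map_sum Φ, ha x]
    calc Φ x = ∑ i, algebraMap R A (f i (Φ x)) * b i := by
          conv_lhs => rw [← ha (Φ x)]
      _ = ∑ i, ∑ j, algebraMap R A (phiComp k R A b f Φ i j (f j x)) * b i := by
          exact (Finset.sum_congr rfl fun i _ => step i).symm

end Stmt11
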